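/- arXiv:2003.11330 — 4 statements merged into one kernel-verified Lean document; each statement's English description precedes it below -/
import Mathlib

section
/- Suppose f : ℝ^m → ℝ^m is continuously differentiable and there exist a positive vector Λ ∈ ℝ^m and ε > 0 such that for every j and every x ∈ ℝ^m, Λ_j (∂f_j/∂x_j)(x) + Σ_{k≠j} Λ_k |(∂f_j/∂x_k)(x)| ≤ -ε Λ_j. Then any solution of x'(t) = f(x(t)) satisfies that ‖e^{εt} x'(t)‖_{Λ,∞} is nonincreasing, where ‖z‖_{Λ,∞} = max_j |Λ_j^{-1} z_j|. -/
open Set Filter Topology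

/-- under the weighted diagonal-dominance condition
`Λ_j ∂f_j/∂x_j + ∑_{k≠j} Λ_k |∂f_j/∂x_k| ≤ -ε Λ_j`, along any solution of `x' = f(x)` the
quantity `‖e^{εt} x'(t)‖_{Λ,∞}` is nonincreasing. -/
theorem weighted_contraction_monotone (m : ℕ) (hm : 0 < m)
    (f : (Fin m → ℝ) → (Fin m → ℝ)) (hf : ContDiff ℝ 1 f)
    (Λ : Fin m → ℝ) (hΛ : ∀ j, 0 < Λ j) (ε : ℝ) (hε : 0 < ε)
    (hcond : ∀ (j : Fin m) (x : Fin m → ℝ),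
      Λ j * (fderiv ℝ f x (Pi.single j 1) j) +
        ∑ k ∈ Finset.univ.erase j, Λ k * |fderiv ℝ f x (Pi.single k 1) j| ≤ -ε * Λ j)
    (x : ℝ → Fin m → ℝ) (hx : ∀ t, HasDerivAt x (f (x t)) t) :
    have hne : (Finset.univ : Finset (Fin m)).Nonempty :=
      Finset.univ_nonempty_iff.mpr (Fin.pos_iff_nonempty.mp hm)
    Antitone (fun t => Real.exp (ε * t) *
      Finset.univ.sup' hne fun j => |(Λ j)⁻¹ * f (x t) j|) := by
  have hne : (Finset.univ : Finset (Fin m)).Nonempty :=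
    Finset.univ_nonempty_iff.mpr (Fin.pos_iff_nonempty.mp hm)
  show Antitone (fun t => Real.exp (ε * t) *
      Finset.univ.sup' hne fun j => |(Λ j)⁻¹ * f (x t) j|)
  set u : ℝ → Fin m → ℝ := fun t => f (x t) with hu_def
  set w : Fin m → ℝ → ℝ := fun j t => |(Λ j)⁻¹ * u t j| with hw_def
  set V : ℝ → ℝ := fun t => Finset.univ.sup' hne fun j => w j t with hV_def
  -- continuity facts
  have hxc : Continuous x := by
    apply continuous_iff_continuousAt.2
    exact fun t => (hx t).continuousAt
  have huc : Continuous u := hf.continuous.comp hxc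
  have hwc : ∀ j, Continuous (w j) :=
    fun j => (continuous_const.mul ((continuous_apply j).comp huc)).abs
  have hVc : Continuous V :=
    Continuous.finset_sup'_apply hne (fun j _ => hwc j)
  have hwle : ∀ j t, w j t ≤ V t :=
    fun j t => Finset.le_sup' (fun j => w j t) (Finset.mem_univ j)
  have hV0 : ∀ t, 0 ≤ V t :=
    fun t => le_trans (abs_nonneg _) (hwle hne.choose t)
  -- derivative of u
  have hud : ∀ t, HasDerivAt u (fderiv ℝ f (x t) (u t)) t := fun t =>
    ((hf.differentiable one_ne_zero) (x t)).hasFDerivAt.comp_hasDerivAt t (hx t)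
  have hudk : ∀ t k, HasDerivAt (fun s => u s k) (fderiv ℝ f (x t) (u t) k) t :=
    fun t => hasDerivAt_pi.mp (hud t)
  -- expand the Jacobian on the standard basis
  have hexp : ∀ (y v : Fin m → ℝ) (k : Fin m),
      fderiv ℝ f y v k = ∑ j, v j * fderiv ℝ f y (Pi.single j 1) k := by
    intro y v k
    conv_lhs => rw [← Finset.univ_sum_single v]
    rw [map_sum]
    rw [Finset.sum_apply]
    refine Finset.sum_congr rfl (fun j _ => ?_)
    have hs : Pi.single j (v j) = v j • (Pi.single j (1:ℝ) : Fin m → ℝ) := by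
      funext i
      simp [Pi.single_apply, mul_ite]
    rw [hs, map_smul]
    simp
  -- the key Dini-derivative estimate
  have key : ∀ τ : ℝ, ∀ r : ℝ, -ε * V τ < r → ∀ᶠ z in 𝓝[>] τ, slope V τ z < r := by
    intro τ r hr
    have hev : ∀ k : Fin m, ∀ᶠ z in 𝓝[>] τ, w k z < V τ + r * (z - τ) := by
      intro k
      rcases lt_or_eq_of_le (hwle k τ) with hk | hk
      · -- w k τ < V τ : continuity suffices
        have h1 : Tendsto (fun z => w k z - r * (z - τ)) (𝓝[>] τ) (𝓝 (w k τ)) := by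
          have : ContinuousAt (fun z => w k z - r * (z - τ)) τ := by fun_prop
          simpa using this.tendsto.mono_left nhdsWithin_le_nhds
        have := h1 (Iio_mem_nhds hk)
        filter_upwards [this] with z hz
        simp only [mem_preimage, mem_Iio] at hz
        linarith
      · -- w k τ = V τ
        set g : ℝ → ℝ := fun z => (Λ k)⁻¹ * u z k with hg_def
        have hg : HasDerivAt g ((Λ k)⁻¹ * fderiv ℝ f (x τ) (u τ) k) τ :=
          (hudk τ k).const_mul _
        have hΛk : (0:ℝ) < (Λ k)⁻¹ := inv_pos.2 (hΛ k)
        -- a derivative bound valid for any unit-sign multiplier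
        have bound : ∀ σ : ℝ, |σ| ≤ 1 → σ * u τ k = |u τ k| →
            σ * ((Λ k)⁻¹ * fderiv ℝ f (x τ) (u τ) k) ≤ -ε * V τ := by
          intro σ hσ hσu
          have habs : |u τ k| = Λ k * V τ := by
            have h1 : (Λ k)⁻¹ * |u τ k| = V τ := by
              rw [← hk]; simp only [hw_def]; simp [ abs_mul, abs_of_pos hΛk]
            rw [← h1, ← mul_assoc, mul_inv_cancel₀ (ne_of_gt (hΛ k)), one_mul]
          have hsum : σ * fderiv ℝ f (x τ) (u τ) k ≤ -ε * Λ k * V τ := by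
            rw [hexp (x τ) (u τ) k]
            rw [Finset.mul_sum]
            have hsplit := Finset.add_sum_erase Finset.univ
              (fun j => σ * (u τ j * fderiv ℝ f (x τ) (Pi.single j 1) k)) (Finset.mem_univ k)
            rw [← hsplit]
            have h1 : σ * (u τ k * fderiv ℝ f (x τ) (Pi.single k 1) k)
                = Λ k * V τ * fderiv ℝ f (x τ) (Pi.single k 1) k := by
              rw [← mul_assoc, hσu, habs]
            have h2 : ∀ j ∈ Finset.univ.erase k,
                σ * (u τ j * fderiv ℝ f (x τ) (Pi.single j 1) k)
                  ≤ Λ j * V τ * |fderiv ℝ f (x τ) (Pi.single j 1) k| := by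
              intro j _
              calc σ * (u τ j * fderiv ℝ f (x τ) (Pi.single j 1) k)
                  ≤ |σ * (u τ j * fderiv ℝ f (x τ) (Pi.single j 1) k)| := le_abs_self _
                _ = |σ| * (|u τ j| * |fderiv ℝ f (x τ) (Pi.single j 1) k|) := by
                    rw [abs_mul, abs_mul]
                _ ≤ 1 * ((Λ j * V τ) * |fderiv ℝ f (x τ) (Pi.single j 1) k|) := by
                    apply mul_le_mul hσ _ (by positivity) zero_le_one
                    apply mul_le_mul_of_nonneg_right _ (abs_nonneg _)
                    have : w j τ = (Λ j)⁻¹ * |u τ j| := by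
                      simp only [hw_def]; simp [abs_mul, abs_of_pos (inv_pos.2 (hΛ j))]
                    have hj := hwle j τ
                    rw [this] at hj
                    have := (hΛ j)
                    calc |u τ j| = Λ j * ((Λ j)⁻¹ * |u τ j|) := by field_simp
                      _ ≤ Λ j * V τ := by
                          exact mul_le_mul_of_nonneg_left hj (le_of_lt this)
                _ = Λ j * V τ * |fderiv ℝ f (x τ) (Pi.single j 1) k| := one_mul _
            calc σ * (u τ k * fderiv ℝ f (x τ) (Pi.single k 1) k)
                  + ∑ j ∈ Finset.univ.erase k,
                      σ * (u τ j * fderiv ℝ f (x τ) (Pi.single j 1) k)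
                ≤ Λ k * V τ * fderiv ℝ f (x τ) (Pi.single k 1) k
                  + ∑ j ∈ Finset.univ.erase k,
                      Λ j * V τ * |fderiv ℝ f (x τ) (Pi.single j 1) k| := by
                  rw [h1]
                  exact add_le_add_right (Finset.sum_le_sum h2) _
              _ = V τ * (Λ k * fderiv ℝ f (x τ) (Pi.single k 1) k
                  + ∑ j ∈ Finset.univ.erase k,
                      Λ j * |fderiv ℝ f (x τ) (Pi.single j 1) k|) := by
                  rw [mul_add, Finset.mul_sum]
                  congr 1
                  · ring
                  · exact Finset.sum_congr rfl (fun j _ => by ring)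
              _ ≤ V τ * (-ε * Λ k) := by
                  exact mul_le_mul_of_nonneg_left (hcond k (x τ)) (hV0 τ)
              _ = -ε * Λ k * V τ := by ring
          calc σ * ((Λ k)⁻¹ * fderiv ℝ f (x τ) (u τ) k)
              = (Λ k)⁻¹ * (σ * fderiv ℝ f (x τ) (u τ) k) := by ring
            _ ≤ (Λ k)⁻¹ * (-ε * Λ k * V τ) := by
                exact mul_le_mul_of_nonneg_left hsum (le_of_lt hΛk)
            _ = -ε * V τ := by
                rw [show -ε * Λ k * V τ = Λ k * (-ε * V τ) by ring, ← mul_assoc,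
                  inv_mul_cancel₀ (ne_of_gt (hΛ k)), one_mul]
        -- we get a limit of slopes `d ≤ -ε * V τ`
        have main : ∃ d : ℝ, d ≤ -ε * V τ ∧ Tendsto (slope (w k) τ) (𝓝[>] τ) (𝓝 d) := by
          rcases eq_or_ne (u τ k) 0 with h0 | h0
          · -- everything vanishes
            have hV0' : V τ = 0 := by
              rw [← hk]; simp only [hw_def]; simp [h0]
            have huτ : u τ = 0 := by
              funext j
              have hj := hwle j τ
              rw [hV0'] at hj
              have : w j τ = 0 := le_antisymm hj (abs_nonneg _)
              simp only [hw_def] at this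
              simp only [abs_eq_zero, mul_eq_zero] at this
              rcases this with h | h
              · exact absurd h (ne_of_gt (inv_pos.2 (hΛ j)))
              · exact h
            have hD0 : fderiv ℝ f (x τ) (u τ) = 0 := by rw [huτ]; exact map_zero _
            have hg0 : HasDerivAt g 0 τ := by
              have := hg; rw [hD0] at this; simpa using this
            have hslope : Tendsto (slope g τ) (𝓝[>] τ) (𝓝 0) :=
              (hasDerivAt_iff_tendsto_slope.1 hg0).mono_left
                (nhdsWithin_mono τ (fun z hz => ne_of_gt hz))
            have habs : Tendsto (fun z => |slope g τ z|) (𝓝[>] τ) (𝓝 0) := by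
              have := hslope.abs; simpa using this
            refine ⟨0, by nlinarith [hV0 τ], ?_⟩
            apply habs.congr'
            filter_upwards [self_mem_nhdsWithin] with z hz
            have hzτ : z ≠ τ := ne_of_gt hz
            have hgτ : g τ = 0 := by simp only [hg_def]; simp [h0]
            rw [slope_def_field, slope_def_field]
            have h1 : w k z = |g z| := by simp only [hw_def, hg_def]
            have h2 : w k τ = 0 := by rw [hk, hV0']
            rw [h1, h2, hgτ, sub_zero, sub_zero, abs_div, abs_of_pos (sub_pos.2 hz)]
          · -- |g| is differentiable at τ
            have hgτ : g τ ≠ 0 := by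
              simp only [hg_def]; exact mul_ne_zero (ne_of_gt hΛk) h0
            have habs : HasDerivAt (fun z => |g z|)
                ((SignType.sign (g τ) : ℝ) * ((Λ k)⁻¹ * fderiv ℝ f (x τ) (u τ) k)) τ :=
              (hasDerivAt_abs hgτ).comp τ hg
            have hsign : (SignType.sign (g τ) : ℝ) * u τ k = |u τ k| ∧
                |(SignType.sign (g τ) : ℝ)| ≤ 1 := by
              rcases lt_or_gt_of_ne h0 with hneg | hpos
              · have : g τ < 0 := mul_neg_of_pos_of_neg hΛk hneg
                rw [sign_neg this]
                constructor
                · simp [abs_of_neg hneg]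
                · simp
              · have : 0 < g τ := mul_pos hΛk hpos
                rw [sign_pos this]
                constructor
                · simp [abs_of_pos hpos]
                · simp
            refine ⟨_, bound _ hsign.2 hsign.1, ?_⟩
            have : Tendsto (slope (fun z => |g z|) τ) (𝓝[>] τ) (𝓝 _) :=
              (hasDerivAt_iff_tendsto_slope.1 habs).mono_left
                (nhdsWithin_mono τ (fun z hz => ne_of_gt hz))
            exact this
        obtain ⟨d, hd, htend⟩ := main
        have : ∀ᶠ z in 𝓝[>] τ, slope (w k) τ z < r :=
          htend (Iio_mem_nhds (lt_of_le_of_lt hd hr))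
        filter_upwards [this, self_mem_nhdsWithin] with z hz hz2
        rw [slope_def_field] at hz
        have hpos : (0:ℝ) < z - τ := sub_pos.2 hz2
        rw [div_lt_iff₀ hpos] at hz
        rw [← hk]
        linarith
    have hall : ∀ᶠ z in 𝓝[>] τ, ∀ k : Fin m, w k z < V τ + r * (z - τ) :=
      eventually_all.2 hev
    filter_upwards [hall, self_mem_nhdsWithin] with z hz hz2
    rw [slope_def_field]
    have hpos : (0:ℝ) < z - τ := sub_pos.2 hz2
    rw [div_lt_iff₀ hpos]
    have : V z < V τ + r * (z - τ) := by
      show (Finset.univ.sup' hne fun j => w j z) < _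
      exact (Finset.sup'_lt_iff hne).2 (fun k _ => hz k)
    linarith
  -- main monotonicity
  intro s t hst
  simp only
  have claim2 : ∀ η : ℝ, 0 < η → η < ε →
      V t ≤ (V s + η) * Real.exp (-(ε - η) * (t - s)) := by
    intro η hη hηε
    have := image_le_of_liminf_slope_right_lt_deriv_boundary
      (f := V) (f' := fun τ => -ε * V τ) (a := s) (b := t)
      (hVc.continuousOn)
      (fun τ _ r hr => ((key τ r hr).frequently))
      (B := fun τ => (V s + η) * Real.exp (-(ε - η) * (τ - s)))
      (B' := fun τ => (V s + η) * (Real.exp (-(ε - η) * (τ - s)) * (-(ε - η))))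
      (by simp; linarith [hV0 s])
      (fun τ => by
        have h1 : HasDerivAt (fun τ : ℝ => -(ε - η) * (τ - s)) (-(ε - η)) τ := by
          simpa using (((hasDerivAt_id τ).sub_const s).const_mul (-(ε - η)))
        exact (h1.exp).const_mul _)
      (fun τ _ hτ => by
        have hB : 0 < (V s + η) * Real.exp (-(ε - η) * (τ - s)) :=
          mul_pos (by linarith [hV0 s]) (Real.exp_pos _)
        show -ε * V τ < (V s + η) * (Real.exp (-(ε - η) * (τ - s)) * -(ε - η))
        rw [show V τ = (V s + η) * Real.exp (-(ε - η) * (τ - s)) from hτ]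
        nlinarith [hB])
    exact this (right_mem_Icc.2 hst)
  have hlim : Tendsto (fun η : ℝ => (V s + η) * Real.exp (-(ε - η) * (t - s)))
      (𝓝[>] (0:ℝ)) (𝓝 (V s * Real.exp (-ε * (t - s)))) := by
    have hc : ContinuousAt (fun η : ℝ => (V s + η) * Real.exp (-(ε - η) * (t - s))) 0 := by
      fun_prop
    have := hc.tendsto.mono_left (nhdsWithin_le_nhds : 𝓝[>] (0:ℝ) ≤ 𝓝 0)
    simpa using this
  have hVt : V t ≤ V s * Real.exp (-ε * (t - s)) := by
    refine ge_of_tendsto hlim ?_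
    filter_upwards [Ioo_mem_nhdsGT_of_mem (left_mem_Ico.2 hε)] with η hη
    exact claim2 η hη.1 hη.2
  calc Real.exp (ε * t) * V t
      ≤ Real.exp (ε * t) * (V s * Real.exp (-ε * (t - s))) :=
        mul_le_mul_of_nonneg_left hVt (Real.exp_pos _).le
    _ = Real.exp (ε * s) * V s := by
        rw [show ε * s = ε * t + -ε * (t - s) by ring, Real.exp_add]; ring
end

section
/- Suppose f : ℝ^m → ℝ^m is continuously differentiable and there exists a positive vector Λ and ε > 0 such that for all j and x, Λ_j (∂f_j/∂x_j)(x) + Σ_{k≠j} Λ_k |(∂f_j/∂x_k)(x)| ≤ -ε Λ_j. Then f has at most one zero. -/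
/-- under the weighted diagonal-dominance condition
`Λ_j ∂f_j/∂x_j + ∑_{k≠j} Λ_k |∂f_j/∂x_k| ≤ -ε Λ_j`, `f` has at most one zero. -/
theorem weighted_contraction_unique_zero (m : ℕ)
    (f : (Fin m → ℝ) → (Fin m → ℝ)) (hf : ContDiff ℝ 1 f)
    (Λ : Fin m → ℝ) (hΛ : ∀ j, 0 < Λ j) (ε : ℝ) (hε : 0 < ε)
    (hcond : ∀ (j : Fin m) (x : Fin m → ℝ),
      Λ j * (fderiv ℝ f x (Pi.single j 1) j) +
        ∑ k ∈ Finset.univ.erase j, Λ k * |fderiv ℝ f x (Pi.single k 1) j| ≤ -ε * Λ j) :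
    ∀ x y : Fin m → ℝ, f x = 0 → f y = 0 → x = y := by
  intro x y hx hy
  by_contra hne
  have hdiff : Differentiable ℝ f := hf.differentiable one_ne_zero
  set u : Fin m → ℝ := x - y with hu
  have hu0 : u ≠ 0 := sub_ne_zero.mpr hne
  obtain ⟨k0, hk0⟩ : ∃ k, u k ≠ 0 := by
    by_contra h; push_neg at h; exact hu0 (funext h)
  have hm : (Finset.univ : Finset (Fin m)).Nonempty := ⟨k0, Finset.mem_univ _⟩
  obtain ⟨j, -, hj⟩ := Finset.exists_max_image Finset.univ (fun k => |u k| / Λ k) hm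
  set M : ℝ := |u j| / Λ j with hM
  have hMk : ∀ k, |u k| ≤ M * Λ k := fun k =>
    (div_le_iff₀ (hΛ k)).mp (hj k (Finset.mem_univ k))
  have hMpos : 0 < M := lt_of_lt_of_le (div_pos (abs_pos.mpr hk0) (hΛ k0))
    (hj k0 (Finset.mem_univ k0))
  have hujM : |u j| = M * Λ j := by
    rw [hM, div_mul_cancel₀ _ (hΛ j).ne']
  set s : ℝ := if 0 ≤ u j then 1 else -1 with hs
  have hsu : s * u j = |u j| := by
    rw [hs]; split_ifs with h
    · rw [one_mul, abs_of_nonneg h]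
    · rw [neg_one_mul, abs_of_neg (lt_of_not_ge h)]
  have hsabs : |s| = 1 := by
    rw [hs]; split_ifs <;> simp
  -- the path
  set γ : ℝ → (Fin m → ℝ) := fun t => y + t • u with hγ
  have hγd : ∀ t, HasDerivAt γ u t := by
    intro t
    have h1 : HasDerivAt (fun t : ℝ => t • u) ((1 : ℝ) • u) t :=
      (hasDerivAt_id t).smul_const u
    have h2 := h1.const_add y
    rw [one_smul] at h2
    exact h2
  set h : ℝ → ℝ := fun t => s * f (γ t) j with hh
  -- derivative of h and its negativity
  have key : ∀ p : Fin m → ℝ, s * (fderiv ℝ f p u j) < 0 := by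
    intro p
    set A : Fin m → ℝ := fun k => fderiv ℝ f p (Pi.single k 1) j with hA
    have hsum : u = ∑ k : Fin m, u k • (Pi.single k (1 : ℝ) : Fin m → ℝ) := by
      ext i
      rw [Finset.sum_apply]
      simp [Pi.single_apply, Finset.sum_ite_eq' Finset.univ i]
    have hexp : fderiv ℝ f p u j = ∑ k : Fin m, u k * A k := by
      conv_lhs => rw [hsum]
      rw [map_sum, Finset.sum_apply]
      congr 1; ext k
      rw [map_smul]
      simp [hA]
    rw [hexp, Finset.mul_sum]
    have hsplit : ∑ k : Fin m, s * (u k * A k)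
        = s * (u j * A j) + ∑ k ∈ Finset.univ.erase j, s * (u k * A k) :=
      (Finset.add_sum_erase _ (fun k => s * (u k * A k)) (Finset.mem_univ j)).symm
    rw [hsplit]
    have h1 : s * (u j * A j) = M * (Λ j * A j) := by
      rw [← mul_assoc, hsu, hujM]; ring
    have h2 : ∑ k ∈ Finset.univ.erase j, s * (u k * A k)
        ≤ ∑ k ∈ Finset.univ.erase j, M * (Λ k * |A k|) := by
      apply Finset.sum_le_sum
      intro k _
      calc s * (u k * A k) ≤ |s * (u k * A k)| := le_abs_self _
        _ = |u k| * |A k| := by rw [abs_mul, hsabs, one_mul, abs_mul]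
        _ ≤ (M * Λ k) * |A k| := by
            exact mul_le_mul_of_nonneg_right (hMk k) (abs_nonneg _)
        _ = M * (Λ k * |A k|) := by ring
    have hcj := hcond j p
    calc s * (u j * A j) + ∑ k ∈ Finset.univ.erase j, s * (u k * A k)
        ≤ M * (Λ j * A j) + ∑ k ∈ Finset.univ.erase j, M * (Λ k * |A k|) :=
          add_le_add h1.le h2
      _ = M * (Λ j * A j + ∑ k ∈ Finset.univ.erase j, Λ k * |A k|) := by
          rw [mul_add, Finset.mul_sum]
      _ ≤ M * (-ε * Λ j) := mul_le_mul_of_nonneg_left hcj hMpos.le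
      _ < 0 := by
          apply mul_neg_of_pos_of_neg hMpos
          have := mul_pos hε (hΛ j)
          linarith
  have hhd : ∀ t, HasDerivAt h (s * (fderiv ℝ f (γ t) u j)) t := by
    intro t
    have hcomp : HasDerivAt (fun t => f (γ t)) (fderiv ℝ f (γ t) u) t :=
      (hdiff (γ t)).hasFDerivAt.comp_hasDerivAt t (hγd t)
    have := (hasDerivAt_pi.mp hcomp) j
    exact this.const_mul s
  have hanti : StrictAnti h := by
    apply strictAnti_of_deriv_neg
    intro t
    rw [(hhd t).deriv]
    exact key (γ t)
  have h0 : h 0 = 0 := by simp [hh, hγ, hy]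
  have h1 : h 1 = 0 := by
    have : γ 1 = x := by simp [hγ, hu]
    simp [hh, this, hx]
  have := hanti (show (0:ℝ) < 1 by norm_num)
  rw [h0, h1] at this
  exact lt_irrefl 0 this
end

section
/- Let y : [-τ₀,∞) → [0,∞) be continuous and differentiable on (0,∞), let μ be positive, nondecreasing, and C¹, and suppose that whenever μ(t)y(t) = sup_{t-τ(t) ≤ s ≤ t} μ(s)y(s) with t > 0, the upper right derivative satisfies d/dt[μ(t)y(t)] < 0. Then P(t) := sup_{t-τ(t) ≤ s ≤ t} μ(s)y(s) is nonincreasing on (0,∞), and consequently y(t) ≤ P(0)/μ(t) for all t ≥ 0. -/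
open Filter Set

/-- Upper-right Dini derivative (with values in `EReal`). -/
noncomputable def diniUR (g : ℝ → ℝ) (t : ℝ) : EReal :=
  Filter.limsup (fun h => (((g (t + h) - g t) / h : ℝ) : EReal)) (nhdsWithin 0 (Set.Ioi 0))

/-- Halanay-type maximum-function argument: if the upper-right derivative of
`μ y` is negative whenever `μ(t)y(t)` attains the running maximum
`P(t) = sup_{t-τ(t) ≤ s ≤ t} μ(s)y(s)`, then `P` is nonincreasing on `(0,∞)` and
`y(t) ≤ P(0)/μ(t)` for all `t ≥ 0`. -/
theorem mu_stability_maximum_argument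
    (τ₀ : ℝ) (hτ₀ : 0 ≤ τ₀) (y μ τ : ℝ → ℝ)
    (hycont : ContinuousOn y (Set.Ici (-τ₀))) (hynn : ∀ t, -τ₀ ≤ t → 0 ≤ y t)
    (hydiff : DifferentiableOn ℝ y (Set.Ioi 0))
    (hμpos : ∀ t, 0 < μ t) (hμmono : Monotone μ) (hμC1 : ContDiff ℝ 1 μ)
    (hτcont : Continuous τ) (hτnn : ∀ t, 0 ≤ t → 0 ≤ τ t)
    (hτlb : ∀ t, 0 ≤ t → -τ₀ ≤ t - τ t)
    (hτmono : Monotone (fun t => t - τ t))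
    (hτtop : Tendsto (fun t => t - τ t) atTop atTop)
    (P : ℝ → ℝ)
    (hP : ∀ t, P t = sSup ((fun s => μ s * y s) '' Set.Icc (t - τ t) t))
    (hkey : ∀ t, 0 < t → μ t * y t = P t → diniUR (fun s => μ s * y s) t < 0) :
    AntitoneOn P (Set.Ioi 0) ∧ ∀ t, 0 ≤ t → y t ≤ P 0 / μ t := by
  set f : ℝ → ℝ := fun s => μ s * y s with hfdef
  have hμcont : Continuous μ := hμC1.continuous
  have hfcont : ContinuousOn f (Ici (-τ₀)) := hμcont.continuousOn.mul hycont
  have hα : ∀ t, 0 ≤ t → t - τ t ≤ t := fun t ht => by have := hτnn t ht; linarith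
  have hmem : ∀ t, 0 ≤ t → t ∈ Icc (t - τ t) t := fun t ht => ⟨hα t ht, le_refl t⟩
  have hbddI : ∀ s t : ℝ, -τ₀ ≤ s → BddAbove (f '' Icc s t) := fun s t hs =>
    (isCompact_Icc.image_of_continuousOn
      (hfcont.mono (fun x hx => le_trans hs hx.1))).bddAbove
  have hlub : ∀ t, 0 ≤ t → IsLUB (f '' Icc (t - τ t) t) (P t) := by
    intro t ht
    rw [hP]
    exact isLUB_csSup ⟨f t, mem_image_of_mem f (hmem t ht)⟩ (hbddI _ _ (hτlb t ht))
  have hfleP : ∀ t, 0 ≤ t → f t ≤ P t := fun t ht =>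
    (hlub t ht).1 (mem_image_of_mem f (hmem t ht))
  have hsupIcc_le : ∀ s t c : ℝ, s ≤ t → (∀ x ∈ Icc s t, f x ≤ c) →
      sSup (f '' Icc s t) ≤ c := by
    intro s t c hst h
    refine csSup_le ⟨f s, mem_image_of_mem f ⟨le_rfl, hst⟩⟩ ?_
    rintro _ ⟨x, hx, rfl⟩
    exact h x hx
  -- Splitting lemma: for 0 ≤ s ≤ t, P t ≤ max (P s) (sup of f on [s,t]).
  have hsplit : ∀ s t : ℝ, 0 ≤ s → s ≤ t → P t ≤ max (P s) (sSup (f '' Icc s t)) := by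
    intro s t hs hst
    refine (hlub t (hs.trans hst)).2 ?_
    rintro _ ⟨x, hx, rfl⟩
    rcases le_or_gt x s with h | h
    · refine le_max_of_le_left ?_
      have hmono : s - τ s ≤ t - τ t := hτmono hst
      exact (hlub s hs).1 (mem_image_of_mem f ⟨le_trans hmono hx.1, h⟩)
    · exact le_max_of_le_right
        (le_csSup (hbddI s t (by linarith)) (mem_image_of_mem f ⟨h.le, hx.2⟩))
  -- Right-local lemma: at every t > 0, P is ≤ P t just to the right of t.
  have hright : ∀ t : ℝ, 0 < t → ∃ δ > 0, ∀ s, t < s → s < t + δ → P s ≤ P t := by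
    intro t ht
    have hPle := hfleP t ht.le
    have hneed : ∃ δ > 0, ∀ r, t < r → r < t + δ → f r ≤ P t := by
      rcases eq_or_lt_of_le hPle with heq | hlt
      · -- f t = P t: use the Dini derivative hypothesis
        have hd := hkey t ht heq
        have hev : ∀ᶠ h in nhdsWithin 0 (Ioi (0:ℝ)),
            (((f (t + h) - f t) / h : ℝ) : EReal) < (0 : EReal) :=
          Filter.eventually_lt_of_limsup_lt hd
        rcases mem_nhdsGT_iff_exists_Ioo_subset.mp hev with ⟨u, hu, hsubu⟩
        refine ⟨u, hu, fun r h1 h2 => ?_⟩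
        have hh : r - t ∈ Ioo (0:ℝ) u := ⟨by linarith, by linarith⟩
        have h3 := hsubu hh
        simp only [mem_setOf_eq] at h3
        have h0 : ((f (t + (r - t)) - f t) / (r - t) : ℝ) < 0 := by exact_mod_cast h3
        have h4 : f (t + (r - t)) - f t < 0 := by
          by_contra hc
          push_neg at hc
          exact absurd (div_nonneg hc (by linarith)) (not_le.mpr h0)
        have h5 : t + (r - t) = r := by ring
        rw [h5] at h4
        linarith
      · -- f t < P t: use continuity
        have hcA : ContinuousAt f t := hfcont.continuousAt (Ici_mem_nhds (by linarith))
        have hev : ∀ᶠ r in nhds t, f r < P t :=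
          hcA.eventually_lt_const hlt
        rcases Metric.eventually_nhds_iff.mp hev with ⟨δ, hδ, hδ'⟩
        refine ⟨δ, hδ, fun r h1 h2 => ?_⟩
        have : dist r t < δ := by
          rw [Real.dist_eq, abs_of_nonneg (by linarith : (0:ℝ) ≤ r - t)]
          linarith
        exact (hδ' this).le
    obtain ⟨δ, hδ, hδ'⟩ := hneed
    refine ⟨δ, hδ, fun s h1 h2 => ?_⟩
    have h3 : P s ≤ max (P t) (sSup (f '' Icc t s)) := hsplit t s ht.le h1.le
    have h4 : sSup (f '' Icc t s) ≤ P t := by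
      refine hsupIcc_le t s _ h1.le (fun x hx => ?_)
      rcases eq_or_lt_of_le hx.1 with h | h
      · rw [← h]; exact hPle
      · exact hδ' x h (lt_of_le_of_lt hx.2 h2)
    calc P s ≤ max (P t) (sSup (f '' Icc t s)) := h3
      _ ≤ P t := max_le le_rfl h4
  -- Left-closedness lemma.
  have hleft : ∀ a t c : ℝ, 0 ≤ a → a < t →
      (∀ s, a ≤ s → s < t → P s ≤ c) → P t ≤ c := by
    intro a t c ha hat hs
    have ht : (0:ℝ) < t := lt_of_le_of_lt ha hat
    have hcA : ContinuousAt f t := hfcont.continuousAt (Ici_mem_nhds (by linarith))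
    have hftc : f t ≤ c := by
      have htend : Tendsto f (nhdsWithin t (Iio t)) (nhds (f t)) :=
        hcA.continuousWithinAt.tendsto
      refine le_of_tendsto htend ?_
      filter_upwards [Ioo_mem_nhdsLT_of_mem (⟨hat, le_rfl⟩ : t ∈ Ioc a t)] with r hr
      exact le_trans (hfleP r (le_trans ha hr.1.le)) (hs r hr.1.le hr.2)
    refine le_of_forall_pos_le_add (fun ε hε => ?_)
    have hev : ∀ᶠ r in nhds t, f r < f t + ε :=
      hcA.eventually_lt_const (lt_add_of_pos_right _ hε)
    rcases Metric.eventually_nhds_iff.mp hev with ⟨δ, hδ, hδ'⟩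
    set s := max a (t - δ/2) with hsdef
    have hsa : a ≤ s := le_max_left _ _
    have hst : s < t := max_lt hat (by linarith)
    have hbound : ∀ x ∈ Icc s t, f x ≤ c + ε := by
      intro x hx
      have hds : dist x t < δ := by
        rw [Real.dist_eq, abs_lt]
        have h6 : t - δ/2 ≤ s := le_max_right _ _
        constructor
        · linarith [hx.1]
        · linarith [hx.2]
      exact le_trans (hδ' hds).le (by linarith)
    have h1 : P t ≤ max (P s) (sSup (f '' Icc s t)) := hsplit s t (le_trans ha hsa) hst.le
    have h2 : P s ≤ c := hs s hsa hst
    have h3 : sSup (f '' Icc s t) ≤ c + ε := hsupIcc_le s t _ hst.le hbound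
    calc P t ≤ max (P s) (sSup (f '' Icc s t)) := h1
      _ ≤ c + ε := max_le (by linarith) h3
  -- Main chain lemma: P is nonincreasing on (0, ∞).
  have hchain : ∀ a b : ℝ, 0 < a → a ≤ b → P b ≤ P a := by
    intro a b ha hab
    by_cases hEq : a = b
    · rw [hEq]
    have hab' : a < b := lt_of_le_of_ne hab hEq
    set T : Set ℝ := {s | s ∈ Icc a b ∧ ∀ r, a ≤ r → r ≤ s → P r ≤ P a} with hT
    have haT : a ∈ T := ⟨⟨le_rfl, hab⟩, fun r h1 h2 => by rw [le_antisymm h2 h1]⟩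
    have hTbdd : BddAbove T := ⟨b, fun s hs => hs.1.2⟩
    have hTne : T.Nonempty := ⟨a, haT⟩
    set m := sSup T with hm
    have ham : a ≤ m := le_csSup hTbdd haT
    have hmb : m ≤ b := csSup_le hTne (fun s hs => hs.1.2)
    have hlt' : ∀ r, a ≤ r → r < m → P r ≤ P a := by
      intro r h1 h2
      obtain ⟨s, hsT, hrs⟩ := exists_lt_of_lt_csSup hTne h2
      exact hsT.2 r h1 hrs.le
    have hPm : P m ≤ P a := by
      rcases eq_or_lt_of_le ham with h | h
      · rw [← h]
      · exact hleft a m (P a) ha.le h hlt'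
    have hmT : m ∈ T := by
      refine ⟨⟨ham, hmb⟩, fun r h1 h2 => ?_⟩
      rcases eq_or_lt_of_le h2 with h | h
      · rw [h]; exact hPm
      · exact hlt' r h1 h
    rcases eq_or_lt_of_le hmb with h | h
    · rw [← h]; exact hPm
    · exfalso
      obtain ⟨δ, hδ, hδ'⟩ := hright m (lt_of_lt_of_le ha ham)
      set s := min b (m + δ/2) with hs
      have hms : m < s := lt_min h (by linarith)
      have hsT : s ∈ T := by
        refine ⟨⟨le_trans ham hms.le, min_le_left _ _⟩, fun r h1 h2 => ?_⟩
        rcases le_or_gt r m with h3 | h3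
        · exact hmT.2 r h1 h3
        · have h4 : r < m + δ :=
            lt_of_le_of_lt (h2.trans (min_le_right _ _)) (by linarith)
          exact (hδ' r h3 h4).trans hPm
      exact absurd (le_csSup hTbdd hsT) (not_le.mpr hms)
  -- P t ≤ P 0 for all t ≥ 0.
  have hP0 : ∀ t, 0 ≤ t → P t ≤ P 0 := by
    intro t ht
    rcases eq_or_lt_of_le ht with h | h
    · rw [← h]
    refine le_of_forall_pos_le_add (fun ε hε => ?_)
    have hc0 : ContinuousWithinAt f (Ici (-τ₀)) 0 := hfcont 0 (by simpa using hτ₀)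
    have hev : ∀ᶠ r in nhdsWithin 0 (Ici (-τ₀)), f r < f 0 + ε :=
      hc0.eventually_lt_const (lt_add_of_pos_right _ hε)
    rcases Metric.mem_nhdsWithin_iff.mp hev with ⟨δ, hδ, hδ'⟩
    set a := min t (δ/2) with hadef
    have ha0 : 0 < a := lt_min h (by linarith)
    have hat : a ≤ t := min_le_left _ _
    have h1 : P t ≤ P a := hchain a t ha0 hat
    have h2 : P a ≤ max (P 0) (sSup (f '' Icc 0 a)) := hsplit 0 a le_rfl ha0.le
    have h3 : sSup (f '' Icc 0 a) ≤ P 0 + ε := by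
      refine hsupIcc_le 0 a _ ha0.le (fun x hx => ?_)
      have hxball : x ∈ Metric.ball (0:ℝ) δ ∩ Ici (-τ₀) := by
        constructor
        · rw [Metric.mem_ball, Real.dist_eq, sub_zero, abs_of_nonneg hx.1]
          exact lt_of_le_of_lt (hx.2.trans (min_le_right _ _)) (by linarith)
        · exact le_trans (by linarith) hx.1
      have h5 := hδ' hxball
      simp only [mem_setOf_eq] at h5
      have h6 : f 0 ≤ P 0 := hfleP 0 le_rfl
      linarith
    calc P t ≤ P a := h1
      _ ≤ max (P 0) (sSup (f '' Icc 0 a)) := h2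
      _ ≤ P 0 + ε := max_le (by linarith) h3
  constructor
  · intro a ha b hb hab
    exact hchain a b ha hab
  · intro t ht
    have h1 : f t ≤ P 0 := le_trans (hfleP t ht) (hP0 t ht)
    rw [le_div_iff₀ (hμpos t)]
    calc y t * μ t = μ t * y t := mul_comm _ _
      _ ≤ P 0 := h1
end

section
/- Let P : [T,∞) → ℝ be defined by P(t) = sup_{t-τ(t) ≤ s ≤ t} y(s) where y is continuous and τ is continuous nonnegative with t - τ(t) nondecreasing. If at every time t where y(t) = P(t) the function y has strictly negative upper-right Dini derivative, then P is nonincreasing on [T,∞). -/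
open Filter Set

/-- abstract maximum-function monotonicity lemma: with
`P(t) = sup_{t-τ(t) ≤ s ≤ t} y(s)`, if `y` has strictly negative upper-right Dini derivative
at every time where `y(t) = P(t)`, then `P` is nonincreasing on `[T,∞)`. -/
theorem maximum_function_nonincreasing
    (T : ℝ) (y τ : ℝ → ℝ) (hy : Continuous y) (hτ : Continuous τ)
    (hτnn : ∀ t, 0 ≤ τ t) (hmono : Monotone (fun t => t - τ t))
    (P : ℝ → ℝ) (hP : ∀ t, P t = sSup (y '' Set.Icc (t - τ t) t))
    (hkey : ∀ t, T ≤ t → y t = P t → diniUR y t < 0) :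
    AntitoneOn P (Set.Ici T) := by
  have hne : ∀ t, (y '' Set.Icc (t - τ t) t).Nonempty := fun t =>
    (Set.nonempty_Icc.2 (by linarith [hτnn t])).image y
  have hbdd : ∀ t, BddAbove (y '' Set.Icc (t - τ t) t) := fun t =>
    (isCompact_Icc.image hy).bddAbove
  have hle : ∀ t, ∀ u ∈ Set.Icc (t - τ t) t, y u ≤ P t := by
    intro t u hu
    rw [hP]
    exact le_csSup (hbdd t) (Set.mem_image_of_mem _ hu)
  have hyP : ∀ t, y t ≤ P t := fun t =>
    hle t t ⟨by linarith [hτnn t], le_refl t⟩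
  -- Main claim: y never exceeds P s to the right of s
  have key : ∀ s, T ≤ s → ∀ u, s ≤ u → y u ≤ P s := by
    intro s hs
    by_contra hcon
    push_neg at hcon
    obtain ⟨u0, hsu0, hu0⟩ := hcon
    set E : Set ℝ := {u : ℝ | s ≤ u ∧ P s < y u} with hE
    have hEne : E.Nonempty := ⟨u0, hsu0, hu0⟩
    have hEbd : BddBelow E := ⟨s, fun u hu => hu.1⟩
    set c := sInf E with hc
    have hcs : s ≤ c := le_csInf hEne fun u hu => hu.1
    have h1 : ∀ u, s ≤ u → u < c → y u ≤ P s := by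
      intro u hsu huc
      by_contra h
      push_neg at h
      exact absurd (csInf_le hEbd ⟨hsu, h⟩) (not_le.2 huc)
    have hyc_le : y c ≤ P s := by
      rcases eq_or_lt_of_le hcs with h | h
      · rw [← h]; exact hyP s
      · have hten : Filter.Tendsto y (nhdsWithin c (Set.Iio c)) (nhds (y c)) :=
          (hy.tendsto c).mono_left nhdsWithin_le_nhds
        refine le_of_tendsto hten ?_
        filter_upwards [Ioo_mem_nhdsLT_of_mem (Set.mem_Ioc.2 ⟨h, le_refl c⟩)] with u hu
        exact h1 u hu.1.le hu.2
    have hyc_ge : P s ≤ y c := by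
      have hcl : c ∈ closure E := csInf_mem_closure hEne hEbd
      have hclosed : IsClosed {u : ℝ | P s ≤ y u} := isClosed_le continuous_const hy
      have : closure E ⊆ {u : ℝ | P s ≤ y u} :=
        hclosed.closure_subset_iff.2 fun u hu => hu.2.le
      exact this hcl
    have hycPs : y c = P s := le_antisymm hyc_le hyc_ge
    have hPc : P c ≤ P s := by
      rw [hP c]
      refine csSup_le (hne c) ?_
      rintro x ⟨u, hu, rfl⟩
      rcases le_total u s with h | h
      · have hτm : s - τ s ≤ c - τ c := hmono hcs
        exact hle s u ⟨le_trans hτm hu.1, h⟩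
      · rcases lt_or_eq_of_le hu.2 with h2 | h2
        · exact h1 u h h2
        · rw [h2, hycPs]
    have hycPc : y c = P c := le_antisymm (hyP c) (hPc.trans_eq hycPs.symm)
    have hd : diniUR y c < 0 := hkey c (hs.trans hcs) hycPc
    have hev : ∀ᶠ h in nhdsWithin 0 (Set.Ioi 0),
        (((y (c + h) - y c) / h : ℝ) : EReal) < 0 :=
      Filter.eventually_lt_of_limsup_lt hd
    rw [Filter.eventually_iff, mem_nhdsGT_iff_exists_Ioo_subset] at hev
    obtain ⟨δ, hδ, hsub⟩ := hev
    have hδ0 : (0 : ℝ) < δ := hδ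
    have hdec : ∀ h ∈ Set.Ioo (0 : ℝ) δ, y (c + h) < y c := by
      intro h hh
      have := hsub hh
      have h0 : (((y (c + h) - y c) / h : ℝ) : EReal) < ((0 : ℝ) : EReal) := by
        simpa using this
      have h1' : (y (c + h) - y c) / h < 0 := EReal.coe_lt_coe_iff.1 h0
      have h2 : y (c + h) - y c < 0 := by
        have := (div_lt_iff₀ hh.1).1 h1'
        simpa using this
      linarith
    have hlb : c + δ ≤ sInf E := by
      refine le_csInf hEne ?_
      intro u hu
      by_contra hlt
      push_neg at hlt
      have huc : c ≤ u := csInf_le hEbd hu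
      rcases eq_or_lt_of_le huc with h | h
      · rw [← h] at hu
        exact absurd hu.2 (not_lt.2 hycPs.le)
      · have : y u < y c := by
          have : y (c + (u - c)) < y c := hdec (u - c) ⟨by linarith, by linarith⟩
          simpa using this
        rw [hycPs] at this
        exact absurd hu.2 (not_lt.2 this.le)
    rw [← hc] at hlb
    linarith
  -- conclude antitone
  intro a ha b hb hab
  rw [hP b]
  refine csSup_le (hne b) ?_
  rintro x ⟨u, hu, rfl⟩
  rcases le_total u a with h | h
  · have hτm : a - τ a ≤ b - τ b := hmono hab
    exact hle a u ⟨le_trans hτm hu.1, h⟩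
  · exact key a ha u h
end
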